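/- arXiv:2310.14286 — 2 statements merged into one kernel-verified Lean document; each statement's English description precedes it below -/
import Mathlib

section
/- For every integer p ≥ 1 and every step size α ∈ (0, (1−γ)/(64p)], it holds in the Loewner order that E[((I − αA)ᵀ (I − αA))^p] ≼ I − (1/2) · α p (1−γ) · Σ, where I is the d×d identity matrix and A = X (X − γY)ᵀ. -/
set_option maxHeartbeats 1000000

open MeasureTheory ProbabilityTheory Matrix Finset
noncomputable section

/-- Euclidean norm of a vector in `ℝ^d`. -/
def euclNorm {d : ℕ} (u : Fin d → ℝ) : ℝ := Real.sqrt (∑ i, u i ^ 2)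

/-- Entrywise expectation of a random matrix. -/
def matExp {d : ℕ} {Ω : Type*} [MeasurableSpace Ω] (P : Measure Ω)
    (M : Ω → Matrix (Fin d) (Fin d) ℝ) : Matrix (Fin d) (Fin d) ℝ :=
  Matrix.of fun i j => ∫ ω, M ω i j ∂P

section Aux

variable {d : ℕ}
local notation "Mat" => Matrix (Fin d) (Fin d) ℝ

lemma psd_of_quad {M : Mat} (h1 : Mᵀ = M) (h2 : ∀ x, 0 ≤ x ⬝ᵥ (M *ᵥ x)) : M.PosSemidef :=
  .of_dotProduct_mulVec_nonneg (by rwa [Matrix.IsHermitian, conjTranspose_eq_transpose_of_trivial])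
   fun x => by simpa using h2 x

lemma quad_of_psd {M : Mat} (h : M.PosSemidef) (x : Fin d → ℝ) : 0 ≤ x ⬝ᵥ (M *ᵥ x) := by
  simpa using h.dotProduct_mulVec_nonneg x

lemma sym_of_psd {M : Mat} (h : M.PosSemidef) : Mᵀ = M := by
  rw [← conjTranspose_eq_transpose_of_trivial]; exact h.1

lemma psd_smul' {M : Mat} {a : ℝ} (ha : 0 ≤ a) (h : M.PosSemidef) : (a • M).PosSemidef := by
  refine psd_of_quad (by rw [Matrix.transpose_smul, sym_of_psd h]) fun x => ?_
  rw [Matrix.smul_mulVec, dotProduct_smul, smul_eq_mul]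
  exact mul_nonneg ha (quad_of_psd h x)

lemma psd_sum {ι : Type*} (s : Finset ι) (f : ι → Mat) (h : ∀ i ∈ s, (f i).PosSemidef) :
    (∑ i ∈ s, f i).PosSemidef := by
  classical
  induction s using Finset.induction_on with
  | empty => simpa using Matrix.PosSemidef.zero
  | insert _ _ hx ih =>
    rw [Finset.sum_insert hx]
    exact Matrix.PosSemidef.add (h _ (Finset.mem_insert_self _ _))
      (ih fun i hi => h i (Finset.mem_insert_of_mem hi))

lemma psd_conj {M : Mat} (h : M.PosSemidef) (A : Mat) : (A * M * Aᵀ).PosSemidef := by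
  have := h.mul_mul_conjTranspose_same A
  rwa [conjTranspose_eq_transpose_of_trivial] at this

lemma vecMulVec_mulVec' (a b x : Fin d → ℝ) : vecMulVec a b *ᵥ x = (b ⬝ᵥ x) • a := by
  ext i
  simp only [Matrix.mulVec, vecMulVec_apply, dotProduct, Pi.smul_apply, smul_eq_mul,
    Finset.sum_mul, Finset.mul_sum]
  exact Finset.sum_congr rfl fun k _ => by ring

lemma vecMulVec_transpose' (a b : Fin d → ℝ) : (vecMulVec a b)ᵀ = vecMulVec b a := by
  ext i j; simp [vecMulVec_apply, mul_comm]

lemma vecMulVec_mul_vecMulVec (a b c e : Fin d → ℝ) :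
    vecMulVec a b * vecMulVec c e = (b ⬝ᵥ c) • vecMulVec a e := by
  ext i j
  simp [Matrix.mul_apply, vecMulVec_apply, dotProduct, Finset.sum_mul, Finset.mul_sum]
  ring_nf
  exact Finset.sum_congr rfl fun k _ => by ring


lemma dot_self_nonneg (a : Fin d → ℝ) : 0 ≤ a ⬝ᵥ a :=
  Finset.sum_nonneg fun i _ => mul_self_nonneg _

lemma dot_CS (a b : Fin d → ℝ) : (a ⬝ᵥ b) ^ 2 ≤ (a ⬝ᵥ a) * (b ⬝ᵥ b) := by
  have h := Finset.sum_mul_sq_le_sq_mul_sq Finset.univ a b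
  simpa [dotProduct, pow_two] using h

lemma dot_add_sq_le (s t : Fin d → ℝ) :
    (s + t) ⬝ᵥ (s + t) ≤ 2 * (s ⬝ᵥ s) + 2 * (t ⬝ᵥ t) := by
  have h := dot_self_nonneg (s - t)
  have e1 : (s + t) ⬝ᵥ (s + t) = s ⬝ᵥ s + 2 * (s ⬝ᵥ t) + t ⬝ᵥ t := by
    simp [add_dotProduct, dotProduct_add, dotProduct_comm t s]; ring
  have e2 : (s - t) ⬝ᵥ (s - t) = s ⬝ᵥ s - 2 * (s ⬝ᵥ t) + t ⬝ᵥ t := by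
    simp [sub_dotProduct, dotProduct_sub, dotProduct_comm t s]; ring
  nlinarith [h]

lemma abs_le_of_sq_le' {z C : ℝ} (hC : 0 ≤ C) (h : z ^ 2 ≤ C ^ 2) : |z| ≤ C := by
  have := Real.sqrt_le_sqrt h
  rwa [Real.sqrt_sq_eq_abs, Real.sqrt_sq hC] at this


lemma psd_D2 {D : Mat} (hD : Dᵀ = D) : (D * D).PosSemidef := by
  have := Matrix.posSemidef_conjTranspose_mul_self D
  rwa [conjTranspose_eq_transpose_of_trivial, hD] at this

/-- Key power bound : ±D^(k+2) ≼ c^k • D². -/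
lemma pow_psd_bound {D : Mat} {c : ℝ} (hD : Dᵀ = D) (hc : 0 ≤ c)
    (h1 : (c • 1 - D).PosSemidef) (h2 : (c • 1 + D).PosSemidef)
    (h3 : ((c ^ 2) • 1 - D * D).PosSemidef) :
    ∀ k : ℕ, ((c ^ k) • (D * D) - D ^ (k + 2)).PosSemidef ∧
      ((c ^ k) • (D * D) + D ^ (k + 2)).PosSemidef := by
  -- step : from k to k+2
  have step : ∀ k : ℕ, ((c ^ k) • (D * D) - D ^ (k + 2)).PosSemidef ∧
      ((c ^ k) • (D * D) + D ^ (k + 2)).PosSemidef →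
      ((c ^ (k + 2)) • (D * D) - D ^ (k + 4)).PosSemidef ∧
      ((c ^ (k + 2)) • (D * D) + D ^ (k + 4)).PosSemidef := by
    intro k ⟨ha, hb⟩
    have hpow : ∀ n : ℕ, D * D ^ n * D = D ^ (n + 2) := fun n => by
      rw [← pow_succ', ← pow_succ]
    -- c^k • D⁴ ∓ D^(k+4) is PSD by conjugation
    have conj1 := psd_conj ha D
    have conj2 := psd_conj hb D
    rw [hD] at conj1 conj2
    have e1 : D * ((c ^ k) • (D * D) - D ^ (k + 2)) * D
        = (c ^ k) • (D * (D * D) * D) - D ^ (k + 4) := by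
      rw [Matrix.mul_sub, Matrix.sub_mul, Matrix.mul_smul, Matrix.smul_mul, hpow]
    have e2 : D * ((c ^ k) • (D * D) + D ^ (k + 2)) * D
        = (c ^ k) • (D * (D * D) * D) + D ^ (k + 4) := by
      rw [Matrix.mul_add, Matrix.add_mul, Matrix.mul_smul, Matrix.smul_mul, hpow]
    rw [e1] at conj1; rw [e2] at conj2
    -- c² D² - D⁴ PSD
    have conj3 := psd_conj h3 D
    rw [hD] at conj3
    have e3 : D * ((c ^ 2) • 1 - D * D) * D = (c ^ 2) • (D * D) - D * (D * D) * D := by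
      rw [Matrix.mul_sub, Matrix.sub_mul, Matrix.mul_smul, Matrix.smul_mul, Matrix.mul_one]
    rw [e3] at conj3
    have conj3' := psd_smul' (pow_nonneg hc k) conj3
    rw [smul_sub, smul_smul, ← pow_add] at conj3'
    constructor
    · have := conj3'.add conj1
      convert this using 1
      abel_nf
    · have := conj3'.add conj2
      convert this using 1
      abel_nf
  -- base cases
  have base0 : ((c ^ 0) • (D * D) - D ^ 2).PosSemidef ∧ ((c ^ 0) • (D * D) + D ^ 2).PosSemidef := by
    have hdd := psd_D2 hD
    constructor
    · simp [pow_two]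
      exact Matrix.PosSemidef.zero
    · simpa [pow_two] using hdd.add hdd
  have base1 : ((c ^ 1) • (D * D) - D ^ 3).PosSemidef ∧ ((c ^ 1) • (D * D) + D ^ 3).PosSemidef := by
    have conj1 := psd_conj h1 D
    have conj2 := psd_conj h2 D
    rw [hD] at conj1 conj2
    have e1 : D * (c • 1 - D) * D = (c ^ 1) • (D * D) - D ^ 3 := by
      rw [Matrix.mul_sub, Matrix.sub_mul, Matrix.mul_smul, Matrix.smul_mul, Matrix.mul_one,
        pow_one, pow_succ, pow_two]
    have e2 : D * (c • 1 + D) * D = (c ^ 1) • (D * D) + D ^ 3 := by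
      rw [Matrix.mul_add, Matrix.add_mul, Matrix.mul_smul, Matrix.smul_mul, Matrix.mul_one,
        pow_one, pow_succ, pow_two]
    exact ⟨e1 ▸ conj1, e2 ▸ conj2⟩
  -- two-step induction
  have main : ∀ k : ℕ,
      (((c ^ k) • (D * D) - D ^ (k + 2)).PosSemidef ∧ ((c ^ k) • (D * D) + D ^ (k + 2)).PosSemidef)
      ∧ (((c ^ (k+1)) • (D * D) - D ^ (k + 3)).PosSemidef ∧
        ((c ^ (k+1)) • (D * D) + D ^ (k + 3)).PosSemidef) := by
    intro k
    induction k with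
    | zero => exact ⟨base0, base1⟩
    | succ n ih =>
      refine ⟨ih.2, ?_⟩
      have := step n ih.1
      convert this using 3 <;> ring_nf
  exact fun k => (main k).1


lemma binom_expand (D : Mat) (p : ℕ) (hp : 1 ≤ p) :
    (1 + D) ^ p = 1 + (p : ℝ) • D + ∑ k ∈ Ico 2 (p + 1), (p.choose k : ℝ) • D ^ k := by
  have h := (Commute.one_right D).add_pow p
  have hterm : ∀ m : ℕ, D ^ m * 1 ^ (p - m) * (p.choose m : Mat) = (p.choose m : ℝ) • D ^ m := by
    intro m
    rw [one_pow, mul_one, ← (Nat.cast_commute (p.choose m) (D ^ m)).eq, ← nsmul_eq_mul,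
      ← Nat.cast_smul_eq_nsmul ℝ]
  rw [add_comm 1 D, h, Finset.sum_congr rfl fun m _ => hterm m, Finset.range_eq_Ico,
    Finset.sum_eq_sum_Ico_succ_bot (by omega : 0 < p + 1),
    Finset.sum_eq_sum_Ico_succ_bot (by omega : 1 < p + 1)]
  simp [add_assoc]

lemma binom_psd {D : Mat} {c : ℝ} (hD : Dᵀ = D) (hc : 0 ≤ c)
    (h1 : (c • 1 - D).PosSemidef) (h2 : (c • 1 + D).PosSemidef)
    (h3 : ((c ^ 2) • 1 - D * D).PosSemidef) (p : ℕ) (hp : 1 ≤ p) :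
    ((1 + (p : ℝ) • D +
        (∑ k ∈ Ico 2 (p + 1), (p.choose k : ℝ) * c ^ (k - 2)) • (D * D)) - (1 + D) ^ p).PosSemidef := by
  rw [binom_expand D p hp]
  have e : (1 + (p : ℝ) • D + (∑ k ∈ Ico 2 (p + 1), (p.choose k : ℝ) * c ^ (k - 2)) • (D * D))
      - (1 + (p : ℝ) • D + ∑ k ∈ Ico 2 (p + 1), (p.choose k : ℝ) • D ^ k)
      = ∑ k ∈ Ico 2 (p + 1), ((p.choose k : ℝ) • ((c ^ (k - 2)) • (D * D) - D ^ k)) := by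
    rw [Finset.sum_smul]
    rw [show ∀ A B S T : Mat, (A + B + S) - (A + B + T) = S - T from fun _ _ _ _ => by abel]
    rw [← Finset.sum_sub_distrib]
    refine Finset.sum_congr rfl fun k _ => ?_
    rw [smul_sub, smul_smul]
  rw [e]
  refine psd_sum _ _ fun k hk => ?_
  have hk2 : 2 ≤ k := (Finset.mem_Ico.mp hk).1
  obtain ⟨j, rfl⟩ : ∃ j, k = j + 2 := ⟨k - 2, by omega⟩
  refine psd_smul' (by positivity) ?_
  simpa using (pow_psd_bound hD hc h1 h2 h3 j).1


-- scalar helper lemmas (clean contexts)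
lemma scal_q1 {α uu zz vz uz : ℝ} (hα0 : 0 < α) (hα64 : α ≤ 1 / 64)
    (huu0 : 0 ≤ uu) (hu : uu ≤ 1) (hz0 : 0 ≤ zz)
    (k2 : vz ^ 2 ≤ 4 * zz) (habs : |uz * vz| ≤ 2 * zz) :
    α ^ 2 * uu * vz ^ 2 - 2 * α * uz * vz ≤ 5 * α * zz := by
  obtain ⟨h1, h2⟩ := abs_le.mp habs
  have hA : α ^ 2 * (uu * vz ^ 2) ≤ α ^ 2 * (4 * zz) :=
    mul_le_mul_of_nonneg_left ((mul_le_of_le_one_left (sq_nonneg _) hu).trans k2) (sq_nonneg α)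
  have hB := mul_le_mul_of_nonneg_left h1 (by positivity : (0:ℝ) ≤ 2 * α)
  have hsm : 4 * α ^ 2 * zz ≤ α * zz := by
    nlinarith [mul_nonneg (mul_nonneg hα0.le (by linarith : (0:ℝ) ≤ 1 - 4 * α)) hz0]
  nlinarith

lemma scal_q2 {α uu zz vz uz : ℝ} (hα0 : 0 < α) (hα64 : α ≤ 1 / 64)
    (huu0 : 0 ≤ uu) (hu : uu ≤ 1) (hz0 : 0 ≤ zz)
    (k2 : vz ^ 2 ≤ 4 * zz) (habs : |uz * vz| ≤ 2 * zz) :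
    -(5 * α * zz) ≤ α ^ 2 * uu * vz ^ 2 - 2 * α * uz * vz := by
  obtain ⟨h1, h2⟩ := abs_le.mp habs
  have hB := mul_le_mul_of_nonneg_left h2 (by positivity : (0:ℝ) ≤ 2 * α)
  nlinarith [mul_nonneg (mul_nonneg (sq_nonneg α) huu0) (sq_nonneg vz),
    mul_nonneg hα0.le hz0]

lemma scal_b2 {α uu vz uz : ℝ} (hα0 : 0 < α) (huu0 : 0 ≤ uu) (hu : uu ≤ 1) :
    (α ^ 2 * uu * vz - α * uz) ^ 2 ≤ 2 * α ^ 4 * vz ^ 2 + 2 * α ^ 2 * uz ^ 2 := by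
  have huu2 : uu ^ 2 ≤ 1 := by nlinarith
  nlinarith [sq_nonneg (α ^ 2 * uu * vz + α * uz),
    mul_le_mul_of_nonneg_left huu2 (by positivity : (0:ℝ) ≤ α ^ 4 * vz ^ 2)]

lemma scal_q3 {α uu vv zz vz uz w : ℝ} (hα0 : 0 < α) (hα64 : α ≤ 1 / 64)
    (huu0 : 0 ≤ uu) (hu : uu ≤ 1) (hvv0 : 0 ≤ vv) (hvv : vv ≤ 4) (hz0 : 0 ≤ zz)
    (k1 : uz ^ 2 ≤ zz) (k2 : vz ^ 2 ≤ 4 * zz)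
    (hw : w ≤ 2 * ((α ^ 2 * uu * vz - α * uz) ^ 2 * vv) + 2 * ((-(α * vz)) ^ 2 * uu)) :
    w ≤ (5 * α) ^ 2 * zz := by
  have hb2 := scal_b2 (uz := uz) (vz := vz) hα0 huu0 hu
  have hbv4 : (α ^ 2 * uu * vz - α * uz) ^ 2 * vv ≤ 4 * (α ^ 2 * uu * vz - α * uz) ^ 2 := by
    nlinarith [sq_nonneg (α ^ 2 * uu * vz - α * uz)]
  have hau1 : (-(α * vz)) ^ 2 * uu ≤ α ^ 2 * vz ^ 2 := by
    nlinarith [mul_le_of_le_one_right (sq_nonneg (α * vz)) hu]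
  have h64 : 64 * α ^ 4 * zz ≤ α ^ 2 * zz := by
    nlinarith [mul_nonneg (mul_nonneg (sq_nonneg α) (by nlinarith : (0:ℝ) ≤ 1 - 64 * α ^ 2)) hz0]
  nlinarith [mul_le_mul_of_nonneg_left k2 (by positivity : (0:ℝ) ≤ 2 * α ^ 4),
    mul_le_mul_of_nonneg_left k1 (by positivity : (0:ℝ) ≤ 2 * α ^ 2),
    mul_le_mul_of_nonneg_left k2 (sq_nonneg α)]

lemma scal_vx2 {γ ux yx vx : ℝ} (hγ0 : 0 ≤ γ) (hγ1 : γ ≤ 1)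
    (hvx : vx = ux - γ * yx) : vx ^ 2 ≤ 2 * (ux ^ 2 + yx ^ 2) := by
  subst hvx
  have hγ2 : γ ^ 2 * yx ^ 2 ≤ yx ^ 2 := by
    nlinarith [mul_nonneg (by nlinarith : (0:ℝ) ≤ 1 - γ ^ 2) (sq_nonneg yx)]
  nlinarith [sq_nonneg (ux + γ * yx)]

lemma scal_t1 {γ α ux yx vx uu : ℝ} (pr : ℝ) (hγ0 : 0 ≤ γ) (hγ1 : γ ≤ 1)
    (hα0 : 0 < α) (huu0 : 0 ≤ uu) (hu : uu ≤ 1)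
    (hvx : vx = ux - γ * yx) (hp0 : 0 ≤ pr) :
    pr * (α ^ 2 * uu * vx ^ 2 - 2 * α * ux * vx)
      ≤ -(2 * α * pr * ux ^ 2) + (α * γ * pr + 2 * α ^ 2 * pr) * (ux ^ 2 + yx ^ 2) := by
  have hvx2 := scal_vx2 hγ0 hγ1 hvx
  have h2ab : 2 * (ux * yx) ≤ ux ^ 2 + yx ^ 2 := by nlinarith [sq_nonneg (ux - yx)]
  have hterm1 : α ^ 2 * uu * vx ^ 2 ≤ 2 * α ^ 2 * (ux ^ 2 + yx ^ 2) := by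
    have h1 : uu * vx ^ 2 ≤ 2 * (ux ^ 2 + yx ^ 2) :=
      (mul_le_of_le_one_left (sq_nonneg _) hu).trans hvx2
    nlinarith [mul_le_mul_of_nonneg_left h1 (sq_nonneg α)]
  have hterm2 : -(2 * α * (ux * vx)) ≤ -(2 * α * ux ^ 2) + α * γ * (ux ^ 2 + yx ^ 2) := by
    rw [hvx]
    nlinarith [mul_le_mul_of_nonneg_left h2ab (mul_nonneg hα0.le hγ0)]
  nlinarith [mul_le_mul_of_nonneg_left hterm1 hp0, mul_le_mul_of_nonneg_left hterm2 hp0]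

lemma scal_t2 {γ α ux yx vx uu vv w : ℝ} (hγ0 : 0 ≤ γ) (hγ1 : γ ≤ 1)
    (hα0 : 0 < α) (hα64 : α ≤ 1 / 64) (huu0 : 0 ≤ uu) (hu : uu ≤ 1)
    (hvv0 : 0 ≤ vv) (hvv : vv ≤ 4) (hvx : vx = ux - γ * yx)
    (hw : w ≤ 2 * ((α ^ 2 * uu * vx - α * ux) ^ 2 * vv) + 2 * ((-(α * vx)) ^ 2 * uu)) :
    w ≤ 24 * α ^ 2 * (ux ^ 2 + yx ^ 2) := by
  have hvx2 := scal_vx2 hγ0 hγ1 hvx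
  have hb2 := scal_b2 (uz := ux) (vz := vx) hα0 huu0 hu
  have hbv4 : (α ^ 2 * uu * vx - α * ux) ^ 2 * vv ≤ 4 * (α ^ 2 * uu * vx - α * ux) ^ 2 := by
    nlinarith [sq_nonneg (α ^ 2 * uu * vx - α * ux)]
  have hau1 : (-(α * vx)) ^ 2 * uu ≤ α ^ 2 * vx ^ 2 := by
    nlinarith [mul_le_of_le_one_right (sq_nonneg (α * vx)) hu]
  have h32 : 32 * α ^ 4 * (ux ^ 2 + yx ^ 2) ≤ 4 * α ^ 2 * (ux ^ 2 + yx ^ 2) := by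
    nlinarith [mul_nonneg (mul_nonneg (sq_nonneg α) (by nlinarith : (0:ℝ) ≤ 4 - 32 * α ^ 2))
      (by positivity : (0:ℝ) ≤ ux ^ 2 + yx ^ 2)]
  nlinarith [mul_le_mul_of_nonneg_left hvx2 (by positivity : (0:ℝ) ≤ 2 * α ^ 4),
    mul_le_mul_of_nonneg_left hvx2 (sq_nonneg α), sq_nonneg ux]


/-- The heart of the argument: a pointwise (per-`ω`) quadratic-form bound. -/
lemma pointwise_bound (γ α : ℝ) (hγ0 : 0 ≤ γ) (hγ1 : γ ≤ 1) (hα0 : 0 < α) (hα64 : α ≤ 1 / 64)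
    (u y : Fin d → ℝ) (hu : u ⬝ᵥ u ≤ 1) (hy : y ⬝ᵥ y ≤ 1) (p : ℕ) (hp : 1 ≤ p)
    (S : ℝ) (hSeq : S = ∑ k ∈ Ico 2 (p + 1), (p.choose k : ℝ) * (5 * α) ^ (k - 2))
    (x : Fin d → ℝ) :
    x ⬝ᵥ ((((1 - α • vecMulVec u (u - γ • y))ᵀ * (1 - α • vecMulVec u (u - γ • y))) ^ p) *ᵥ x)
      ≤ x ⬝ᵥ x - 2 * α * p * (u ⬝ᵥ x) ^ 2
        + (α * γ * p + 2 * α ^ 2 * p + 24 * S * α ^ 2) * ((u ⬝ᵥ x) ^ 2 + (y ⬝ᵥ x) ^ 2) := by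
  have hS0 : 0 ≤ S := hSeq ▸ Finset.sum_nonneg fun k _ => by positivity
  set v : Fin d → ℝ := u - γ • y with hv
  set N : Mat := vecMulVec u v with hN
  set D : Mat := α ^ 2 • (Nᵀ * N) - α • N - α • Nᵀ with hDdef
  -- B = 1 + D
  have hB : (1 - α • N)ᵀ * (1 - α • N) = 1 + D := by
    rw [hDdef, Matrix.transpose_sub, Matrix.transpose_smul, Matrix.transpose_one,
      Matrix.sub_mul, Matrix.mul_sub, Matrix.mul_sub]
    simp only [Matrix.one_mul, Matrix.mul_one, Matrix.smul_mul, Matrix.mul_smul, smul_smul,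
      ← pow_two, one_pow]
    abel
  -- D is symmetric
  have hD : Dᵀ = D := by
    rw [hDdef]
    rw [Matrix.transpose_sub, Matrix.transpose_sub, Matrix.transpose_smul, Matrix.transpose_smul,
      Matrix.transpose_smul, Matrix.transpose_mul, Matrix.transpose_transpose]
    abel
  have huu0 : 0 ≤ u ⬝ᵥ u := dot_self_nonneg u
  have hvv0 : 0 ≤ v ⬝ᵥ v := dot_self_nonneg v
  -- v ⬝ᵥ v ≤ 4
  have hvv : v ⬝ᵥ v ≤ 4 := by
    have huy : |u ⬝ᵥ y| ≤ 1 := by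
      refine abs_le_of_sq_le' zero_le_one ?_
      calc (u ⬝ᵥ y) ^ 2 ≤ (u ⬝ᵥ u) * (y ⬝ᵥ y) := dot_CS u y
        _ ≤ 1 ^ 2 := by nlinarith [dot_self_nonneg u, dot_self_nonneg y]
    have hexp : v ⬝ᵥ v = u ⬝ᵥ u - 2 * γ * (u ⬝ᵥ y) + γ ^ 2 * (y ⬝ᵥ y) := by
      rw [hv]
      simp [sub_dotProduct, dotProduct_sub, smul_dotProduct, dotProduct_smul,
        dotProduct_comm y u]
      ring
    have h1 := abs_le.mp huy
    nlinarith [dot_self_nonneg y, h1.1, h1.2]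
  -- mulVec formula for D
  have hDx : ∀ z : Fin d → ℝ,
      D *ᵥ z = (α ^ 2 * (u ⬝ᵥ u) * (v ⬝ᵥ z) - α * (u ⬝ᵥ z)) • v + (-(α * (v ⬝ᵥ z))) • u := by
    intro z
    rw [hDdef, Matrix.sub_mulVec, Matrix.sub_mulVec, Matrix.smul_mulVec,
      Matrix.smul_mulVec, Matrix.smul_mulVec, hN, vecMulVec_transpose',
      vecMulVec_mul_vecMulVec, Matrix.smul_mulVec, vecMulVec_mulVec', vecMulVec_mulVec',
      vecMulVec_mulVec']
    ext i
    simp [dotProduct_comm v u]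
    ring
  -- quadratic form of D
  have ht1 : ∀ z : Fin d → ℝ,
      z ⬝ᵥ (D *ᵥ z) = α ^ 2 * (u ⬝ᵥ u) * (v ⬝ᵥ z) ^ 2 - 2 * α * (u ⬝ᵥ z) * (v ⬝ᵥ z) := by
    intro z
    rw [hDx z]
    simp [dotProduct_add, dotProduct_smul, dotProduct_comm z v, dotProduct_comm z u]
    ring
  -- quadratic form of D*D
  have ht2 : ∀ z : Fin d → ℝ, z ⬝ᵥ ((D * D) *ᵥ z) = (D *ᵥ z) ⬝ᵥ (D *ᵥ z) := by
    intro z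
    rw [← Matrix.mulVec_mulVec, Matrix.dotProduct_mulVec]
    congr 1
    conv_lhs => rw [← hD]
    rw [Matrix.vecMul_transpose]
  -- Dz ⬝ Dz upper bound shape
  have hwb : ∀ z : Fin d → ℝ, (D *ᵥ z) ⬝ᵥ (D *ᵥ z)
      ≤ 2 * ((α ^ 2 * (u ⬝ᵥ u) * (v ⬝ᵥ z) - α * (u ⬝ᵥ z)) ^ 2 * (v ⬝ᵥ v))
        + 2 * ((-(α * (v ⬝ᵥ z))) ^ 2 * (u ⬝ᵥ u)) := by
    intro z
    rw [hDx z]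
    have hw := dot_add_sq_le ((α ^ 2 * (u ⬝ᵥ u) * (v ⬝ᵥ z) - α * (u ⬝ᵥ z)) • v)
      ((-(α * (v ⬝ᵥ z))) • u)
    have hbv : ∀ (b : ℝ), (b • v) ⬝ᵥ (b • v) = b ^ 2 * (v ⬝ᵥ v) := fun b => by
      simp [smul_dotProduct, dotProduct_smul]; ring
    have hau : ∀ (a : ℝ), (a • u) ⬝ᵥ (a • u) = a ^ 2 * (u ⬝ᵥ u) := fun a => by
      simp [smul_dotProduct, dotProduct_smul]; ring
    rwa [hbv, hau] at hw
  -- generic-z Cauchy-Schwarz bounds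
  have key_bounds : ∀ z : Fin d → ℝ,
      (u ⬝ᵥ z) ^ 2 ≤ z ⬝ᵥ z ∧ (v ⬝ᵥ z) ^ 2 ≤ 4 * (z ⬝ᵥ z) ∧
        |(u ⬝ᵥ z) * (v ⬝ᵥ z)| ≤ 2 * (z ⬝ᵥ z) := by
    intro z
    have hz0 := dot_self_nonneg z
    have h1 : (u ⬝ᵥ z) ^ 2 ≤ z ⬝ᵥ z := by nlinarith [dot_CS u z]
    have h2 : (v ⬝ᵥ z) ^ 2 ≤ 4 * (z ⬝ᵥ z) := by nlinarith [dot_CS v z]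
    refine ⟨h1, h2, abs_le_of_sq_le' (by positivity) ?_⟩
    calc ((u ⬝ᵥ z) * (v ⬝ᵥ z)) ^ 2 = (u ⬝ᵥ z) ^ 2 * (v ⬝ᵥ z) ^ 2 := by ring
      _ ≤ (z ⬝ᵥ z) * (4 * (z ⬝ᵥ z)) := by nlinarith [sq_nonneg (u ⬝ᵥ z), sq_nonneg (v ⬝ᵥ z)]
      _ = (2 * (z ⬝ᵥ z)) ^ 2 := by ring
  -- Loewner hypotheses with c = 5α
  have hq1 : ((5 * α) • (1 : Mat) - D).PosSemidef := by
    refine psd_of_quad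
      (by rw [Matrix.transpose_sub, Matrix.transpose_smul, Matrix.transpose_one, hD]) fun z => ?_
    obtain ⟨k1, k2, k3⟩ := key_bounds z
    rw [Matrix.sub_mulVec, dotProduct_sub, Matrix.smul_mulVec, dotProduct_smul,
      Matrix.one_mulVec, smul_eq_mul, ht1 z, sub_nonneg]
    exact scal_q1 hα0 hα64 huu0 hu (dot_self_nonneg z) k2 k3
  have hq2 : ((5 * α) • (1 : Mat) + D).PosSemidef := by
    refine psd_of_quad
      (by rw [Matrix.transpose_add, Matrix.transpose_smul, Matrix.transpose_one, hD]) fun z => ?_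
    obtain ⟨k1, k2, k3⟩ := key_bounds z
    rw [Matrix.add_mulVec, dotProduct_add, Matrix.smul_mulVec, dotProduct_smul,
      Matrix.one_mulVec, smul_eq_mul, ht1 z, ← sub_neg_eq_add, sub_nonneg]
    exact neg_le.mpr (scal_q2 hα0 hα64 huu0 hu (dot_self_nonneg z) k2 k3)
  have hq3 : (((5 * α) ^ 2) • (1 : Mat) - D * D).PosSemidef := by
    have hDD : (D * D)ᵀ = D * D := by rw [Matrix.transpose_mul, hD]
    refine psd_of_quad
      (by rw [Matrix.transpose_sub, Matrix.transpose_smul, Matrix.transpose_one, hDD]) fun z => ?_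
    obtain ⟨k1, k2, k3⟩ := key_bounds z
    rw [Matrix.sub_mulVec, dotProduct_sub, Matrix.smul_mulVec, dotProduct_smul,
      Matrix.one_mulVec, smul_eq_mul, ht2 z, sub_nonneg]
    exact scal_q3 hα0 hα64 huu0 hu hvv0 hvv (dot_self_nonneg z) k1 k2 (hwb z)
  -- apply the binomial PSD bound
  have hmain := quad_of_psd (binom_psd hD (by positivity) hq1 hq2 hq3 p hp) x
  rw [hB]
  rw [← hSeq, Matrix.sub_mulVec, dotProduct_sub, Matrix.add_mulVec, Matrix.add_mulVec,
    dotProduct_add, dotProduct_add, Matrix.smul_mulVec, Matrix.smul_mulVec,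
    dotProduct_smul, dotProduct_smul, Matrix.one_mulVec, smul_eq_mul, smul_eq_mul,
    ht1 x, ht2 x, sub_nonneg] at hmain
  refine le_trans hmain ?_
  have hvx : v ⬝ᵥ x = u ⬝ᵥ x - γ * (y ⬝ᵥ x) := by
    rw [hv]; simp [sub_dotProduct, smul_dotProduct]
  have ht1b := scal_t1 (γ := γ) (α := α) (uu := u ⬝ᵥ u) (p : ℝ) hγ0 hγ1 hα0 huu0 hu hvx
    (Nat.cast_nonneg p)
  have ht2b := scal_t2 (γ := γ) (α := α) (uu := u ⬝ᵥ u) (vv := v ⬝ᵥ v) hγ0 hγ1 hα0 hα64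
    huu0 hu hvv0 hvv hvx (hwb x)
  have hSt2 : S * ((D *ᵥ x) ⬝ᵥ (D *ᵥ x)) ≤ S * (24 * α ^ 2 * ((u ⬝ᵥ x) ^ 2 + (y ⬝ᵥ x) ^ 2)) :=
    mul_le_mul_of_nonneg_left ht2b hS0
  nlinarith [ht1b, hSt2]


lemma eucl_dot {u : Fin d → ℝ} (h : euclNorm u ≤ 1) : u ⬝ᵥ u ≤ 1 := by
  have h0 : (0:ℝ) ≤ ∑ i, u i ^ 2 := by positivity
  have hs := Real.sq_sqrt h0
  have hnn := Real.sqrt_nonneg (∑ i, u i ^ 2)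
  have : (∑ i, u i ^ 2) ≤ 1 := by
    unfold euclNorm at h; nlinarith
  calc u ⬝ᵥ u = ∑ i, u i ^ 2 := by simp [dotProduct, pow_two]
    _ ≤ 1 := this

lemma coord_abs_le {u : Fin d → ℝ} (h : euclNorm u ≤ 1) (i : Fin d) : |u i| ≤ 1 := by
  have h1 : u ⬝ᵥ u ≤ 1 := eucl_dot h
  have h2 : u i ^ 2 ≤ u ⬝ᵥ u := by
    have : u i * u i ≤ ∑ j, u j * u j :=
      Finset.single_le_sum (fun j _ => mul_self_nonneg (u j)) (Finset.mem_univ i)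
    simpa [dotProduct, pow_two] using this
  exact abs_le_of_sq_le' zero_le_one (by nlinarith)

-- matrix power entry bound
lemma mat_pow_entry_bound {M : Mat} {K : ℝ} (hK : 0 ≤ K) (h : ∀ i j, |M i j| ≤ K) :
    ∀ n (i j : Fin d), |(M ^ (n + 1)) i j| ≤ ((d : ℝ) * K) ^ n * K := by
  intro n
  induction n with
  | zero => intro i j; simpa using h i j
  | succ n ih =>
    intro i j
    have : (M ^ (n + 2)) i j = ∑ l, (M ^ (n + 1)) i l * M l j := by
      rw [pow_succ, Matrix.mul_apply]
    rw [this]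
    calc |∑ l, (M ^ (n + 1)) i l * M l j| ≤ ∑ l, |(M ^ (n + 1)) i l * M l j| :=
        Finset.abs_sum_le_sum_abs _ _
      _ ≤ ∑ _l : Fin d, ((d : ℝ) * K) ^ n * K * K := by
          refine Finset.sum_le_sum fun l _ => ?_
          rw [abs_mul]
          exact mul_le_mul (ih i l) (h l j) (abs_nonneg _) (by positivity)
      _ = ((d : ℝ) * K) ^ (n + 1) * K := by
          simp [Finset.sum_const, Finset.card_univ]
          ring
-- matrix power entry measurability
lemma mat_pow_entry_meas {Ω : Type*} [MeasurableSpace Ω] {M : Ω → Mat}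
    (h : ∀ i j, Measurable fun ω => M ω i j) (n : ℕ) (i j : Fin d) :
    Measurable fun ω => (M ω ^ n) i j := by
  induction n generalizing i j with
  | zero =>
    simp only [pow_zero]
    have : (fun ω : Ω => (1 : Mat) i j) = fun _ => (1 : Mat) i j := rfl
    exact measurable_const
  | succ n ih =>
    have : (fun ω => (M ω ^ (n + 1)) i j) = fun ω => ∑ l, (M ω ^ n) i l * M ω l j := by
      funext ω; rw [pow_succ, Matrix.mul_apply]
    rw [this]
    exact Finset.measurable_sum _ fun l _ => (ih i l).mul (h l j)

-- quadratic form of matExp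
lemma quad_matExp {Ω : Type*} [MeasurableSpace Ω] (P : Measure Ω) (M : Ω → Mat)
    (h : ∀ i j, Integrable (fun ω => M ω i j) P) (x : Fin d → ℝ) :
    x ⬝ᵥ (matExp P M *ᵥ x) = ∫ ω, x ⬝ᵥ (M ω *ᵥ x) ∂P := by
  have e1 : ∀ (A : Mat), x ⬝ᵥ (A *ᵥ x) = ∑ i, ∑ j, x i * A i j * x j := by
    intro A
    simp only [dotProduct, Matrix.mulVec, Finset.mul_sum]
    exact Finset.sum_congr rfl fun i _ => Finset.sum_congr rfl fun j _ => by ring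
  rw [e1]
  have : ∀ i j, x i * (matExp P M) i j * x j = ∫ ω, x i * M ω i j * x j ∂P := by
    intro i j
    rw [show (matExp P M) i j = ∫ ω, M ω i j ∂P from rfl]
    rw [← integral_const_mul, ← integral_mul_const]
  calc ∑ i, ∑ j, x i * (matExp P M) i j * x j
      = ∑ i, ∑ j, ∫ ω, x i * M ω i j * x j ∂P :=
        Finset.sum_congr rfl fun i _ => Finset.sum_congr rfl fun j _ => this i j
    _ = ∫ ω, ∑ i, ∑ j, x i * M ω i j * x j ∂P := by
        rw [integral_finset_sum _ fun i _ => integrable_finset_sum _ fun j _ =>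
          ((h i j).const_mul _).mul_const _]
        exact Finset.sum_congr rfl fun i _ =>
          (integral_finset_sum _ fun j _ => ((h i j).const_mul _).mul_const _).symm
    _ = ∫ ω, x ⬝ᵥ (M ω *ᵥ x) ∂P := by
        refine integral_congr_ae (Filter.Eventually.of_forall fun ω => ?_)
        simpa using (e1 (M ω)).symm

lemma quad_integrable {Ω : Type*} [MeasurableSpace Ω] (P : Measure Ω) (M : Ω → Mat)
    (h : ∀ i j, Integrable (fun ω => M ω i j) P) (x : Fin d → ℝ) :
    Integrable (fun ω => x ⬝ᵥ (M ω *ᵥ x)) P := by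
  have e1 : ∀ (A : Mat), x ⬝ᵥ (A *ᵥ x) = ∑ i, ∑ j, x i * A i j * x j := by
    intro A
    simp only [dotProduct, Matrix.mulVec, Finset.mul_sum]
    exact Finset.sum_congr rfl fun i _ => Finset.sum_congr rfl fun j _ => by ring
  simp only [e1]
  exact integrable_finset_sum _ fun i _ => integrable_finset_sum _ fun j _ =>
    ((h i j).const_mul _).mul_const _


lemma geom8 (n : ℕ) : ∑ j ∈ Finset.range n, (1 / 8 : ℝ) ^ j ≤ 2 := by
  have h : (1 / 8 : ℝ) ≠ 1 := by norm_num
  rw [geom_sum_eq h]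
  have h8 : (0:ℝ) ≤ (1/8:ℝ) ^ n := by positivity
  have e : ((1/8:ℝ) ^ n - 1) / (1/8 - 1) = (1 - (1/8:ℝ)^n) / (7/8) := by ring
  rw [e, div_le_iff₀ (by norm_num : (0:ℝ) < 7/8)]
  nlinarith

lemma S_le_psq (p : ℕ) (hp : 1 ≤ p) {α : ℝ} (hα0 : 0 < α) (hpa : (p : ℝ) * (5 * α) ≤ 1 / 8) :
    ∑ k ∈ Finset.Ico 2 (p + 1), (p.choose k : ℝ) * (5 * α) ^ (k - 2) ≤ (p : ℝ) ^ 2 := by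
  have hp0 : (0:ℝ) < p := by exact_mod_cast hp
  have hterm : ∀ k ∈ Finset.Ico 2 (p + 1),
      (p.choose k : ℝ) * (5 * α) ^ (k - 2) ≤ (p : ℝ) ^ 2 / 2 * (1 / 8 : ℝ) ^ (k - 2) := by
    intro k hk
    have hk2 : 2 ≤ k := (Finset.mem_Ico.mp hk).1
    obtain ⟨j, rfl⟩ : ∃ j, k = j + 2 := ⟨k - 2, by omega⟩
    have hchoose : (p.choose (j + 2) : ℝ) ≤ (p : ℝ) ^ (j + 2) / 2 := by
      refine (Nat.choose_le_pow_div (j + 2) p).trans ?_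
      have h2 : (2:ℝ) ≤ ((j + 2).factorial : ℝ) := by
        exact_mod_cast Nat.factorial_le (by omega : 2 ≤ j + 2)
      rw [div_le_div_iff₀ (by positivity) (by norm_num)]
      nlinarith [pow_nonneg hp0.le (j + 2)]
    have hpow : ((p : ℝ) * (5 * α)) ^ j ≤ (1 / 8 : ℝ) ^ j :=
      pow_le_pow_left₀ (by positivity) hpa j
    have h5α : (0:ℝ) ≤ (5 * α) ^ j := by positivity
    calc (p.choose (j + 2) : ℝ) * (5 * α) ^ (j + 2 - 2)
        ≤ ((p : ℝ) ^ (j + 2) / 2) * (5 * α) ^ j := by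
          simp only [Nat.add_sub_cancel]
          exact mul_le_mul_of_nonneg_right hchoose h5α
      _ = (p : ℝ) ^ 2 / 2 * ((p : ℝ) * (5 * α)) ^ j := by rw [mul_pow, pow_add]; ring
      _ ≤ (p : ℝ) ^ 2 / 2 * (1 / 8 : ℝ) ^ (j + 2 - 2) := by
          simp only [Nat.add_sub_cancel]
          exact mul_le_mul_of_nonneg_left hpow (by positivity)
  calc ∑ k ∈ Finset.Ico 2 (p + 1), (p.choose k : ℝ) * (5 * α) ^ (k - 2)
      ≤ ∑ k ∈ Finset.Ico 2 (p + 1), (p : ℝ) ^ 2 / 2 * (1 / 8 : ℝ) ^ (k - 2) :=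
        Finset.sum_le_sum hterm
    _ = (p : ℝ) ^ 2 / 2 * ∑ k ∈ Finset.Ico 2 (p + 1), (1 / 8 : ℝ) ^ (k - 2) := by
        rw [Finset.mul_sum]
    _ ≤ (p : ℝ) ^ 2 / 2 * 2 := by
        refine mul_le_mul_of_nonneg_left ?_ (by positivity)
        rw [Finset.sum_Ico_eq_sum_range]
        refine le_trans (le_of_eq (Finset.sum_congr rfl fun i _ => ?_)) (geom8 (p + 1 - 2))
        congr 1
        omega
    _ = (p : ℝ) ^ 2 := by ring

lemma coeff_final {γ α S : ℝ} (pr : ℝ) (hpr : 1 ≤ pr) (hγ0 : 0 ≤ γ) (hγ1 : γ ≤ 1)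
    (hα0 : 0 < α) (hαle : α * (64 * pr) ≤ 1 - γ) (hS0 : 0 ≤ S) (hSle : S ≤ pr ^ 2) :
    1 / 2 * α * pr * (1 - γ) + 2 * (α * γ * pr + 2 * α ^ 2 * pr + 24 * S * α ^ 2)
      ≤ 2 * α * pr := by
  have h1γ : 0 ≤ 1 - γ := by nlinarith [mul_pos hα0 (by linarith : (0:ℝ) < 64 * pr)]
  have h1 : S * α ^ 2 ≤ pr ^ 2 * α ^ 2 := mul_le_mul_of_nonneg_right hSle (sq_nonneg α)
  have h2 : (3 / 4 * α * pr) * (α * (64 * pr)) ≤ (3 / 4 * α * pr) * (1 - γ) :=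
    mul_le_mul_of_nonneg_left hαle (by positivity)
  have h3 : (α / 16) * (α * (64 * pr)) ≤ (α / 16) * (1 - γ) :=
    mul_le_mul_of_nonneg_left hαle (by positivity)
  have h4 : (1 - γ) * α ≤ (1 - γ) * α * pr := by
    nlinarith [mul_nonneg h1γ hα0.le]
  have h5 : 0 ≤ α * pr * (1 - γ) := by positivity
  nlinarith


lemma B_entry_bound (γ α : ℝ) (hγ0 : 0 ≤ γ) (hγ1 : γ ≤ 1) (hα0 : 0 < α)
    (hα64 : α ≤ 1 / 64) (u y : Fin d → ℝ) (hu : euclNorm u ≤ 1) (hy : euclNorm y ≤ 1)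
    (i j : Fin d) :
    |(((1 - α • vecMulVec u (u - γ • y))ᵀ * (1 - α • vecMulVec u (u - γ • y)) : Mat)) i j|
      ≤ 4 * (d : ℝ) := by
  have hE : ∀ k l : Fin d, |((1 - α • vecMulVec u (u - γ • y) : Mat)) k l| ≤ 2 := by
    intro k l
    have e : ((1 - α • vecMulVec u (u - γ • y) : Mat)) k l
        = (if k = l then (1:ℝ) else 0) - α * (u k * (u l - γ * y l)) := by
      simp [Matrix.sub_apply, Matrix.smul_apply, Matrix.one_apply, vecMulVec_apply,
        Pi.sub_apply, Pi.smul_apply, smul_eq_mul]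
    rw [e]
    have h1 : |if k = l then (1:ℝ) else 0| ≤ 1 := by split <;> simp
    have h2 : |α * (u k * (u l - γ * y l))| ≤ 1 := by
      rw [abs_mul, abs_mul]
      have hk := coord_abs_le hu k
      have hl := coord_abs_le hu l
      have hyl := coord_abs_le hy l
      have hsub : |u l - γ * y l| ≤ 2 := by
        calc |u l - γ * y l| ≤ |u l| + |γ * y l| := abs_sub _ _
          _ ≤ 1 + 1 := by
              rw [abs_mul, abs_of_nonneg hγ0]
              have : γ * |y l| ≤ 1 := by nlinarith [abs_nonneg (y l)]
              exact add_le_add hl this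
          _ = 2 := by norm_num
      have habsα : |α| = α := abs_of_pos hα0
      rw [habsα]
      nlinarith [mul_le_mul hk hsub (abs_nonneg _) zero_le_one, abs_nonneg (u k),
        abs_nonneg (u l - γ * y l), mul_nonneg (abs_nonneg (u k)) (abs_nonneg (u l - γ * y l))]
    calc |(if k = l then (1:ℝ) else 0) - α * (u k * (u l - γ * y l))|
        ≤ |if k = l then (1:ℝ) else 0| + |α * (u k * (u l - γ * y l))| := abs_sub _ _
      _ ≤ 2 := by linarith
  rw [Matrix.mul_apply]
  calc |∑ l, ((1 - α • vecMulVec u (u - γ • y) : Mat))ᵀ i l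
        * ((1 - α • vecMulVec u (u - γ • y) : Mat)) l j|
      ≤ ∑ l, |((1 - α • vecMulVec u (u - γ • y) : Mat))ᵀ i l
        * ((1 - α • vecMulVec u (u - γ • y) : Mat)) l j| := Finset.abs_sum_le_sum_abs _ _
    _ ≤ ∑ _l : Fin d, 2 * 2 := by
        refine Finset.sum_le_sum fun l _ => ?_
        rw [abs_mul, Matrix.transpose_apply]
        exact mul_le_mul (hE l i) (hE l j) (abs_nonneg _) (by norm_num)
    _ = 4 * (d : ℝ) := by
        simp [Finset.sum_const, Finset.card_univ]
        ring

end Aux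

/-- For every integer `p ≥ 1` and every step size `α ∈ (0, (1-γ)/(64 p)]`,
`E[((I - αA)ᵀ (I - αA))^p] ≼ I - (1/2)·αp(1-γ)·Σ` in the Loewner order, where
`A = X (X - γ Y)ᵀ` and `Σ = E[X Xᵀ]`. -/
theorem stmt5 {d : ℕ} (hd : 1 ≤ d) (γ : ℝ) (hγ : γ ∈ Set.Ico (0 : ℝ) 1)
    {Ω : Type*} [MeasurableSpace Ω] (P : Measure Ω) [IsProbabilityMeasure P]
    (X Y : Ω → Fin d → ℝ) (hXm : Measurable X) (hYm : Measurable Y)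
    (hX1 : ∀ᵐ ω ∂P, euclNorm (X ω) ≤ 1) (hY1 : ∀ᵐ ω ∂P, euclNorm (Y ω) ≤ 1)
    (hXY : IdentDistrib X Y P P)
    (p : ℕ) (hp : 1 ≤ p)
    (α : ℝ) (hα : α ∈ Set.Ioc 0 ((1 - γ) / (64 * p))) :
    ((1 - ((1 / 2 : ℝ) * α * p * (1 - γ)) • matExp P (fun ω => vecMulVec (X ω) (X ω)))
      - matExp P (fun ω =>
          ((1 - α • vecMulVec (X ω) (X ω - γ • Y ω))ᵀ
            * (1 - α • vecMulVec (X ω) (X ω - γ • Y ω))) ^ p)).PosSemidef := by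
  obtain ⟨hα0, hαle⟩ := hα
  obtain ⟨hγ0, hγ1⟩ := hγ
  have hpr1 : (1 : ℝ) ≤ (p : ℝ) := by exact_mod_cast hp
  have hp0 : (0 : ℝ) < (p : ℝ) := by linarith
  have hαpr : α * (64 * (p : ℝ)) ≤ 1 - γ := by
    rw [← le_div_iff₀ (by positivity)]
    exact hαle
  have h1γ : 0 < 1 - γ := by linarith
  have hα64 : α ≤ 1 / 64 := by
    nlinarith [mul_le_mul_of_nonneg_left hpr1 (by positivity : (0:ℝ) ≤ 64 * α)]
  have hpa : (p : ℝ) * (5 * α) ≤ 1 / 8 := by nlinarith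
  -- the matrix-valued random variables
  set Bf : Ω → Matrix (Fin d) (Fin d) ℝ := fun ω =>
    (1 - α • vecMulVec (X ω) (X ω - γ • Y ω))ᵀ * (1 - α • vecMulVec (X ω) (X ω - γ • Y ω))
    with hBf
  show ((1 - ((1 / 2 : ℝ) * α * (p:ℝ) * (1 - γ)) • matExp P (fun ω => vecMulVec (X ω) (X ω)))
      - matExp P (fun ω => Bf ω ^ p)).PosSemidef
  obtain ⟨S, hSeq⟩ : ∃ S : ℝ, (∑ k ∈ Ico 2 (p + 1), (p.choose k : ℝ) * (5 * α) ^ (k - 2)) = S :=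
    ⟨_, rfl⟩
  have hS0 : 0 ≤ S := by
    rw [← hSeq]; exact Finset.sum_nonneg fun k _ => by positivity
  have hSle : S ≤ (p : ℝ) ^ 2 := hSeq ▸ S_le_psq p hp hα0 hpa
  -- measurability
  have hXi : ∀ i, Measurable fun ω => X ω i := fun i => (measurable_pi_apply i).comp hXm
  have hYi : ∀ i, Measurable fun ω => Y ω i := fun i => (measurable_pi_apply i).comp hYm
  have hEm : ∀ k l : Fin d,
      Measurable fun ω => (1 - α • vecMulVec (X ω) (X ω - γ • Y ω)) k l := by
    intro k l
    have : (fun ω => (1 - α • vecMulVec (X ω) (X ω - γ • Y ω)) k l)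
        = fun ω => (if k = l then (1:ℝ) else 0) - α * (X ω k * (X ω l - γ * Y ω l)) := by
      funext ω
      simp [Matrix.sub_apply, Matrix.smul_apply, Matrix.one_apply, vecMulVec_apply,
        Pi.sub_apply, Pi.smul_apply, smul_eq_mul]
    rw [this]
    exact measurable_const.sub
      (((hXi k).mul ((hXi l).sub ((hYi l).const_mul γ))).const_mul α)
  have hBm : ∀ i j, Measurable fun ω => Bf ω i j := by
    intro i j
    have : (fun ω => Bf ω i j) = fun ω =>
        ∑ l, (1 - α • vecMulVec (X ω) (X ω - γ • Y ω)) l i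
          * (1 - α • vecMulVec (X ω) (X ω - γ • Y ω)) l j := by
      funext ω
      show (((1 - α • vecMulVec (X ω) (X ω - γ • Y ω))ᵀ
          * (1 - α • vecMulVec (X ω) (X ω - γ • Y ω)) : Matrix (Fin d) (Fin d) ℝ)) i j
        = ∑ l, (1 - α • vecMulVec (X ω) (X ω - γ • Y ω)) l i
            * (1 - α • vecMulVec (X ω) (X ω - γ • Y ω)) l j
      rw [Matrix.mul_apply]
      exact Finset.sum_congr rfl fun l _ => by rw [Matrix.transpose_apply]
    rw [this]
    exact Finset.measurable_sum _ fun l _ => (hEm l i).mul (hEm l j)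
  have hMm : ∀ i j, Measurable fun ω => (Bf ω ^ p) i j := fun i j =>
    mat_pow_entry_meas hBm p i j
  -- integrability of entries of Bf^p
  have hIntM : ∀ i j, Integrable (fun ω => (Bf ω ^ p) i j) P := by
    intro i j
    refine Integrable.mono' (integrable_const (((d : ℝ) * (4 * (d:ℝ))) ^ (p - 1) * (4 * (d:ℝ))))
      (hMm i j).aestronglyMeasurable ?_
    filter_upwards [hX1, hY1] with ω h1 h2
    rw [Real.norm_eq_abs]
    have hb : ∀ i' j', |Bf ω i' j'| ≤ 4 * (d:ℝ) :=
      fun i' j' => B_entry_bound γ α hγ0 hγ1.le hα0 hα64 (X ω) (Y ω) h1 h2 i' j'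
    have := mat_pow_entry_bound (by positivity) hb (p - 1) i j
    rwa [Nat.sub_add_cancel hp] at this
  -- integrability of entries of vecMulVec X X
  have hIntXX : ∀ i j, Integrable (fun ω => vecMulVec (X ω) (X ω) i j) P := by
    intro i j
    refine Integrable.mono' (integrable_const 1)
      (((hXi i).mul (hXi j)).aestronglyMeasurable) ?_
    filter_upwards [hX1] with ω h1
    rw [Real.norm_eq_abs, vecMulVec_apply, abs_mul]
    exact mul_le_one₀ (coord_abs_le h1 i) (abs_nonneg _) (coord_abs_le h1 j)
  -- symmetry of everything
  have hBsym : ∀ ω, (Bf ω ^ p)ᵀ = Bf ω ^ p := by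
    intro ω
    rw [Matrix.transpose_pow]
    congr 1
    rw [hBf, Matrix.transpose_mul, Matrix.transpose_transpose]
  have hSgmsym : (matExp P (fun ω => vecMulVec (X ω) (X ω)))ᵀ
      = matExp P (fun ω => vecMulVec (X ω) (X ω)) := by
    ext i j
    rw [Matrix.transpose_apply]
    show (∫ ω, vecMulVec (X ω) (X ω) j i ∂P) = (∫ ω, vecMulVec (X ω) (X ω) i j ∂P)
    refine integral_congr_ae (Filter.Eventually.of_forall fun ω => ?_)
    show vecMulVec (X ω) (X ω) j i = vecMulVec (X ω) (X ω) i j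
    rw [vecMulVec_apply, vecMulVec_apply, mul_comm]
  have hEsym : (matExp P (fun ω => Bf ω ^ p))ᵀ = matExp P (fun ω => Bf ω ^ p) := by
    ext i j
    rw [Matrix.transpose_apply]
    show (∫ ω, (Bf ω ^ p) j i ∂P) = (∫ ω, (Bf ω ^ p) i j ∂P)
    refine integral_congr_ae (Filter.Eventually.of_forall fun ω => ?_)
    show (Bf ω ^ p) j i = (Bf ω ^ p) i j
    conv_lhs => rw [← hBsym ω]
    rw [Matrix.transpose_apply]
  refine psd_of_quad ?_ ?_
  · -- symmetry
    rw [Matrix.transpose_sub, Matrix.transpose_sub, Matrix.transpose_smul, Matrix.transpose_one,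
      hSgmsym, hEsym]
  · -- quadratic form
    intro x
    rw [Matrix.sub_mulVec, dotProduct_sub, Matrix.sub_mulVec, dotProduct_sub,
      Matrix.smul_mulVec, dotProduct_smul, Matrix.one_mulVec, smul_eq_mul]
    rw [quad_matExp P _ hIntM x, quad_matExp P _ hIntXX x]
    have hSgmq : (∫ ω, x ⬝ᵥ (vecMulVec (X ω) (X ω) *ᵥ x) ∂P) = ∫ ω, (X ω ⬝ᵥ x) ^ 2 ∂P := by
      refine integral_congr_ae (Filter.Eventually.of_forall fun ω => ?_)
      show x ⬝ᵥ (vecMulVec (X ω) (X ω) *ᵥ x) = (X ω ⬝ᵥ x) ^ 2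
      rw [vecMulVec_mulVec', dotProduct_smul, smul_eq_mul, dotProduct_comm x (X ω)]
      ring
    rw [hSgmq]
    -- integrable scalar functions
    have hIntℓ : Integrable (fun ω => (X ω ⬝ᵥ x) ^ 2) P := by
      refine Integrable.mono' (integrable_const (x ⬝ᵥ x))
        ((Finset.measurable_sum _ fun i _ => (hXi i).mul_const (x i)).pow_const 2
          |>.aestronglyMeasurable) ?_
      filter_upwards [hX1] with ω h1
      rw [Real.norm_eq_abs, abs_of_nonneg (sq_nonneg _)]
      nlinarith [dot_CS (X ω) x, eucl_dot h1, dot_self_nonneg x, dot_self_nonneg (X ω),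
        sq_nonneg (X ω ⬝ᵥ x)]
    have hIntm : Integrable (fun ω => (Y ω ⬝ᵥ x) ^ 2) P := by
      refine Integrable.mono' (integrable_const (x ⬝ᵥ x))
        ((Finset.measurable_sum _ fun i _ => (hYi i).mul_const (x i)).pow_const 2
          |>.aestronglyMeasurable) ?_
      filter_upwards [hY1] with ω h1
      rw [Real.norm_eq_abs, abs_of_nonneg (sq_nonneg _)]
      nlinarith [dot_CS (Y ω) x, eucl_dot h1, dot_self_nonneg x, dot_self_nonneg (Y ω),
        sq_nonneg (Y ω ⬝ᵥ x)]
    -- identical distribution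
    have hident : (∫ ω, (X ω ⬝ᵥ x) ^ 2 ∂P) = ∫ ω, (Y ω ⬝ᵥ x) ^ 2 ∂P := by
      have hg : Measurable fun v : Fin d → ℝ => (v ⬝ᵥ x) ^ 2 :=
        (Finset.measurable_sum _ fun i _ => (measurable_pi_apply (X := fun _ : Fin d => ℝ) i).mul_const (x i)).pow_const 2
      exact (hXY.comp hg).integral_eq
    -- the main integral bound
    have hmono : (∫ ω, x ⬝ᵥ ((Bf ω ^ p) *ᵥ x) ∂P)
        ≤ ∫ ω, (x ⬝ᵥ x - 2 * α * p * (X ω ⬝ᵥ x) ^ 2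
            + (α * γ * p + 2 * α ^ 2 * p + 24 * S * α ^ 2)
              * ((X ω ⬝ᵥ x) ^ 2 + (Y ω ⬝ᵥ x) ^ 2)) ∂P := by
      refine integral_mono_ae (quad_integrable P _ hIntM x) ?_ ?_
      · exact ((integrable_const _).sub (hIntℓ.const_mul _)).add
          ((hIntℓ.add hIntm).const_mul _)
      · filter_upwards [hX1, hY1] with ω h1 h2
        exact pointwise_bound γ α hγ0 hγ1.le hα0 hα64 (X ω) (Y ω) (eucl_dot h1) (eucl_dot h2)
          p hp S hSeq.symm x
    have hval : (∫ ω, (x ⬝ᵥ x - 2 * α * p * (X ω ⬝ᵥ x) ^ 2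
            + (α * γ * p + 2 * α ^ 2 * p + 24 * S * α ^ 2)
              * ((X ω ⬝ᵥ x) ^ 2 + (Y ω ⬝ᵥ x) ^ 2)) ∂P)
        = x ⬝ᵥ x - 2 * α * p * (∫ ω, (X ω ⬝ᵥ x) ^ 2 ∂P)
            + (α * γ * p + 2 * α ^ 2 * p + 24 * S * α ^ 2)
              * ((∫ ω, (X ω ⬝ᵥ x) ^ 2 ∂P) + ∫ ω, (Y ω ⬝ᵥ x) ^ 2 ∂P) := by
      have hIA : Integrable (fun ω => x ⬝ᵥ x - 2 * α * (p:ℝ) * (X ω ⬝ᵥ x) ^ 2) P :=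
        (integrable_const (x ⬝ᵥ x)).sub (hIntℓ.const_mul (2 * α * (p:ℝ)))
      have hIB : Integrable (fun ω => (α * γ * (p:ℝ) + 2 * α ^ 2 * (p:ℝ) + 24 * S * α ^ 2)
          * ((X ω ⬝ᵥ x) ^ 2 + (Y ω ⬝ᵥ x) ^ 2)) P :=
        (hIntℓ.add hIntm).const_mul _
      rw [integral_add hIA hIB,
        integral_sub (integrable_const (x ⬝ᵥ x)) (hIntℓ.const_mul (2 * α * (p:ℝ))),
        integral_const, integral_const_mul, integral_const_mul, integral_add hIntℓ hIntm]
      simp [measure_univ]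
    have hσ0 : 0 ≤ ∫ ω, (X ω ⬝ᵥ x) ^ 2 ∂P := integral_nonneg fun ω => sq_nonneg _
    have hcoeff := coeff_final (γ := γ) (α := α) (S := S) (p : ℝ) hpr1 hγ0 hγ1.le hα0 hαpr
      hS0 hSle
    have := mul_le_mul_of_nonneg_right hcoeff hσ0
    rw [sub_nonneg]
    calc (∫ ω, x ⬝ᵥ ((Bf ω ^ p) *ᵥ x) ∂P)
        ≤ x ⬝ᵥ x - 2 * α * p * (∫ ω, (X ω ⬝ᵥ x) ^ 2 ∂P)
            + (α * γ * p + 2 * α ^ 2 * p + 24 * S * α ^ 2)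
              * ((∫ ω, (X ω ⬝ᵥ x) ^ 2 ∂P) + ∫ ω, (Y ω ⬝ᵥ x) ^ 2 ∂P) := hval ▸ hmono
      _ ≤ x ⬝ᵥ x - 1 / 2 * α * p * (1 - γ) * ∫ ω, (X ω ⬝ᵥ x) ^ 2 ∂P := by
          rw [← hident]
          nlinarith [this]
end
end

section
/- Assume Σ = E[X Xᵀ] is positive definite and let Ā = E[X (X − γY)ᵀ]. Then, in the Loewner order, Σ^{−1/2} Āᵀ Σ^{−1} Ā Σ^{−1/2} ≽ (1−γ)² I; equivalently, for every x ∈ ℝ^d, ‖Σ^{−1/2} Ā Σ^{−1/2} x‖ ≥ (1−γ)‖x‖. -/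
open MeasureTheory ProbabilityTheory Matrix
noncomputable section

/-- The `ℓ²`-operator norm of a real `d × d` matrix. -/
def opNorm {d : ℕ} (M : Matrix (Fin d) (Fin d) ℝ) : ℝ :=
  ‖Matrix.toEuclideanCLM (𝕜 := ℝ) M‖

/-- The square root of a positive semidefinite matrix, as `Matrix.PosSemidef.sqrt` was defined
in the older Mathlib (that declaration is gone). -/
def psdSqrt {d : ℕ} {A : Matrix (Fin d) (Fin d) ℝ} (hA : A.PosSemidef) : Matrix (Fin d) (Fin d) ℝ :=
  hA.1.eigenvectorUnitary.1 * diagonal ((↑) ∘ (Real.sqrt ∘ hA.1.eigenvalues)) *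
    (star hA.1.eigenvectorUnitary : Matrix (Fin d) (Fin d) ℝ)

section aux

lemma integrable_of_bdd' {Ω : Type*} [MeasurableSpace Ω] {μ : Measure Ω} [IsFiniteMeasure μ]
    {f : Ω → ℝ} (hm : Measurable f) {C : ℝ} (hb : ∀ᵐ ω ∂μ, |f ω| ≤ C) : Integrable f μ :=
  memLp_one_iff_integrable.mp
    (MemLp.of_bound hm.aestronglyMeasurable C (by simpa [Real.norm_eq_abs] using hb))

lemma cs_integral' {Ω : Type*} [MeasurableSpace Ω] (μ : Measure Ω) [IsFiniteMeasure μ]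
    {f g : Ω → ℝ} (hf : Measurable f) (hg : Measurable g) {Cf Cg : ℝ}
    (hfb : ∀ᵐ ω ∂μ, |f ω| ≤ Cf) (hgb : ∀ᵐ ω ∂μ, |g ω| ≤ Cg) :
    |∫ ω, f ω * g ω ∂μ| ≤ Real.sqrt (∫ ω, f ω ^ 2 ∂μ) * Real.sqrt (∫ ω, g ω ^ 2 ∂μ) := by
  have hpq : Real.HolderConjugate 2 2 := Real.HolderConjugate.two_two
  have hf2 : MemLp f (ENNReal.ofReal 2) μ :=
    MemLp.of_bound hf.aestronglyMeasurable Cf (by simpa [Real.norm_eq_abs] using hfb)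
  have hg2 : MemLp g (ENNReal.ofReal 2) μ :=
    MemLp.of_bound hg.aestronglyMeasurable Cg (by simpa [Real.norm_eq_abs] using hgb)
  have key := integral_mul_norm_le_Lp_mul_Lq hpq hf2 hg2
  have h1 : |∫ ω, f ω * g ω ∂μ| ≤ ∫ ω, ‖f ω‖ * ‖g ω‖ ∂μ := by
    calc |∫ ω, f ω * g ω ∂μ| ≤ ∫ ω, |f ω * g ω| ∂μ := by
          simpa [Real.norm_eq_abs, abs_mul] using
            norm_integral_le_integral_norm (μ := μ) (fun ω => f ω * g ω)
      _ = ∫ ω, ‖f ω‖ * ‖g ω‖ ∂μ := by simp [Real.norm_eq_abs, abs_mul]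
  refine h1.trans (key.trans_eq ?_)
  have e1 : ∀ h : Ω → ℝ, (∫ ω, ‖h ω‖ ^ (2:ℝ) ∂μ) = ∫ ω, h ω ^ 2 ∂μ := fun h =>
    integral_congr_ae (Filter.Eventually.of_forall fun ω => by
      show ‖h ω‖ ^ (2:ℝ) = h ω ^ 2
      rw [show ((2:ℝ)) = ((2:ℕ):ℝ) by norm_num, Real.rpow_natCast]
      simp [Real.norm_eq_abs, sq_abs])
  rw [e1, e1]
  rw [Real.sqrt_eq_rpow, Real.sqrt_eq_rpow]

variable {d : ℕ}

lemma euclNorm_nonneg' (u : Fin d → ℝ) : 0 ≤ euclNorm u := Real.sqrt_nonneg _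

lemma euclNorm_eq_norm' (u : Fin d → ℝ) :
    euclNorm u = ‖(WithLp.equiv 2 (Fin d → ℝ)).symm u‖ := by
  rw [EuclideanSpace.norm_eq]; simp [euclNorm, Real.norm_eq_abs, sq_abs]

lemma abs_le_euclNorm' (u : Fin d → ℝ) (i : Fin d) : |u i| ≤ euclNorm u := by
  rw [← Real.sqrt_sq_eq_abs]
  exact Real.sqrt_le_sqrt (Finset.single_le_sum (fun j _ => sq_nonneg (u j)) (Finset.mem_univ i))

lemma dot_self_eq_sq' (u : Fin d → ℝ) : u ⬝ᵥ u = ∑ i, u i ^ 2 := by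
  simp [dotProduct, sq]

lemma euclNorm_sqrt_dot' (u : Fin d → ℝ) : euclNorm u = Real.sqrt (u ⬝ᵥ u) := by
  rw [euclNorm, dot_self_eq_sq']

lemma sq_euclNorm' (u : Fin d → ℝ) : euclNorm u ^ 2 = u ⬝ᵥ u := by
  rw [euclNorm_sqrt_dot', Real.sq_sqrt]
  rw [dot_self_eq_sq']
  exact Finset.sum_nonneg fun i _ => sq_nonneg _

lemma dot_mulVec_eq' (M : Matrix (Fin d) (Fin d) ℝ) (u v : Fin d → ℝ) :
    u ⬝ᵥ (M *ᵥ v) = (Mᵀ *ᵥ u) ⬝ᵥ v := by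
  rw [Matrix.dotProduct_mulVec, Matrix.mulVec_transpose]

/-- Bilinear form of an entrywise expectation of a rank-one random matrix. -/
lemma dot_matExp_vecMulVec' {Ω : Type*} [MeasurableSpace Ω] (P : Measure Ω)
    [IsFiniteMeasure P] (X Z : Ω → Fin d → ℝ)
    (hint : ∀ i j, Integrable (fun ω => X ω i * Z ω j) P) (a b : Fin d → ℝ) :
    a ⬝ᵥ ((matExp P (fun ω => vecMulVec (X ω) (Z ω))) *ᵥ b)
      = ∫ ω, (a ⬝ᵥ X ω) * (b ⬝ᵥ Z ω) ∂P := by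
  have hint2 : ∀ i j, Integrable (fun ω => (a i * b j) * (X ω i * Z ω j)) P := fun i j =>
    (hint i j).const_mul _
  have hRHS : ∫ ω, (a ⬝ᵥ X ω) * (b ⬝ᵥ Z ω) ∂P
      = ∑ i, ∑ j, (a i * b j) * ∫ ω, X ω i * Z ω j ∂P := by
    have h1 : ∀ ω, (a ⬝ᵥ X ω) * (b ⬝ᵥ Z ω)
        = ∑ i, ∑ j, (a i * b j) * (X ω i * Z ω j) := by
      intro ω
      rw [dotProduct, dotProduct, Finset.sum_mul_sum]
      exact Finset.sum_congr rfl fun i _ => Finset.sum_congr rfl fun j _ => by ring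
    simp_rw [h1]
    rw [integral_finset_sum _ (fun i _ => integrable_finset_sum _ (fun j _ => hint2 i j))]
    refine Finset.sum_congr rfl fun i _ => ?_
    rw [integral_finset_sum _ (fun j _ => hint2 i j)]
    exact Finset.sum_congr rfl fun j _ => integral_const_mul _ _
  rw [hRHS]
  simp only [matExp, mulVec, dotProduct, Matrix.of_apply, vecMulVec_apply, Finset.mul_sum]
  refine Finset.sum_congr rfl fun i _ => Finset.sum_congr rfl fun j _ => by ring

end aux

/-- If `Σ = E[X Xᵀ]` is positive definite and `Ā = E[X (X - γY)ᵀ]`, then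
`Σ^{-1/2} Āᵀ Σ⁻¹ Ā Σ^{-1/2} ≽ (1-γ)² I` in the Loewner order; equivalently, for every `x`,
`‖Σ^{-1/2} Ā Σ^{-1/2} x‖ ≥ (1-γ)‖x‖`. -/
theorem stmt16 {d : ℕ} (hd : 1 ≤ d) (γ : ℝ) (hγ : γ ∈ Set.Ico (0 : ℝ) 1)
    {Ω : Type*} [MeasurableSpace Ω] (P : Measure Ω) [IsProbabilityMeasure P]
    (X Y : Ω → Fin d → ℝ) (hXm : Measurable X) (hYm : Measurable Y)
    (hX1 : ∀ᵐ ω ∂P, euclNorm (X ω) ≤ 1) (hY1 : ∀ᵐ ω ∂P, euclNorm (Y ω) ≤ 1)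
    (hXY : IdentDistrib X Y P P)
    (Sig : Matrix (Fin d) (Fin d) ℝ)
    (hSig : Sig = matExp P (fun ω => vecMulVec (X ω) (X ω))) (hpd : Sig.PosDef)
    (Abar : Matrix (Fin d) (Fin d) ℝ)
    (hAbar : Abar = matExp P (fun ω => vecMulVec (X ω) (X ω - γ • Y ω))) :
    ((psdSqrt hpd.posSemidef)⁻¹ * Abarᵀ * Sig⁻¹ * Abar * (psdSqrt hpd.posSemidef)⁻¹
        - ((1 - γ) ^ 2) • (1 : Matrix (Fin d) (Fin d) ℝ)).PosSemidef ∧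
      ∀ x : Fin d → ℝ,
        (1 - γ) * euclNorm x
          ≤ euclNorm (((psdSqrt hpd.posSemidef)⁻¹ * Abar * (psdSqrt hpd.posSemidef)⁻¹).mulVec x) := by
  obtain ⟨hγ0, hγ1⟩ := hγ
  -- componentwise measurability and bounds
  have hXim : ∀ i, Measurable fun ω => X ω i := fun i => (measurable_pi_apply i).comp hXm
  have hYim : ∀ i, Measurable fun ω => Y ω i := fun i => (measurable_pi_apply i).comp hYm
  have hXb : ∀ i, ∀ᵐ ω ∂P, |X ω i| ≤ 1 := fun i =>
    hX1.mono fun ω h => (abs_le_euclNorm' _ i).trans h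
  have hYb : ∀ i, ∀ᵐ ω ∂P, |Y ω i| ≤ 1 := fun i =>
    hY1.mono fun ω h => (abs_le_euclNorm' _ i).trans h
  have hXXint : ∀ i j, Integrable (fun ω => X ω i * X ω j) P := fun i j =>
    integrable_of_bdd' ((hXim i).mul (hXim j))
      (((hXb i).and (hXb j)).mono fun ω ⟨h1, h2⟩ => by
        rw [abs_mul]
        calc |X ω i| * |X ω j| ≤ 1 * 1 := by
              exact mul_le_mul h1 h2 (abs_nonneg _) zero_le_one
          _ = 1 := one_mul 1)
  have hXYint : ∀ i j, Integrable (fun ω => X ω i * Y ω j) P := fun i j =>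
    integrable_of_bdd' ((hXim i).mul (hYim j))
      (((hXb i).and (hYb j)).mono fun ω ⟨h1, h2⟩ => by
        rw [abs_mul]
        calc |X ω i| * |Y ω j| ≤ 1 * 1 := by
              exact mul_le_mul h1 h2 (abs_nonneg _) zero_le_one
          _ = 1 := one_mul 1)
  -- the cross matrix C
  set Cm : Matrix (Fin d) (Fin d) ℝ := matExp P (fun ω => vecMulVec (X ω) (Y ω)) with hCm
  -- Abar = Sig - γ • Cm
  have hAsplit : Abar = Sig - γ • Cm := by
    rw [hAbar, hSig, hCm]
    ext i j
    simp only [matExp, Matrix.of_apply, Matrix.sub_apply, Matrix.smul_apply, vecMulVec_apply,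
      Pi.sub_apply, Pi.smul_apply, smul_eq_mul]
    rw [show (fun ω => X ω i * (X ω j - γ * Y ω j))
        = (fun ω => X ω i * X ω j - γ * (X ω i * Y ω j)) by funext ω; ring]
    rw [integral_sub (hXXint i j) ((hXYint i j).const_mul γ), integral_const_mul]
  -- bilinear forms
  have hSigdot : ∀ a b : Fin d → ℝ,
      a ⬝ᵥ (Sig *ᵥ b) = ∫ ω, (a ⬝ᵥ X ω) * (b ⬝ᵥ X ω) ∂P := by
    intro a b; rw [hSig]; exact dot_matExp_vecMulVec' P X X hXXint a b
  have hCdot : ∀ a b : Fin d → ℝ,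
      a ⬝ᵥ (Cm *ᵥ b) = ∫ ω, (a ⬝ᵥ X ω) * (b ⬝ᵥ Y ω) ∂P := by
    intro a b; rw [hCm]; exact dot_matExp_vecMulVec' P X Y hXYint a b
  -- measurable + bounded linear functionals of X, Y
  have hdotXm : ∀ a : Fin d → ℝ, Measurable fun ω => a ⬝ᵥ X ω := by
    intro a
    simp only [dotProduct]
    exact Finset.measurable_sum _ fun i _ => (hXim i).const_mul (a i)
  have hdotYm : ∀ a : Fin d → ℝ, Measurable fun ω => a ⬝ᵥ Y ω := by
    intro a
    simp only [dotProduct]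
    exact Finset.measurable_sum _ fun i _ => (hYim i).const_mul (a i)
  have hdotXb : ∀ a : Fin d → ℝ, ∀ᵐ ω ∂P, |a ⬝ᵥ X ω| ≤ ∑ i, |a i| := by
    intro a
    filter_upwards [hX1] with ω hω
    calc |a ⬝ᵥ X ω| ≤ ∑ i, |a i * X ω i| := Finset.abs_sum_le_sum_abs _ _
      _ ≤ ∑ i, |a i| := Finset.sum_le_sum fun i _ => by
          rw [abs_mul]
          calc |a i| * |X ω i| ≤ |a i| * 1 :=
                mul_le_mul_of_nonneg_left ((abs_le_euclNorm' _ i).trans hω) (abs_nonneg _)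
            _ = |a i| := mul_one _
  have hdotYb : ∀ a : Fin d → ℝ, ∀ᵐ ω ∂P, |a ⬝ᵥ Y ω| ≤ ∑ i, |a i| := by
    intro a
    filter_upwards [hY1] with ω hω
    calc |a ⬝ᵥ Y ω| ≤ ∑ i, |a i * Y ω i| := Finset.abs_sum_le_sum_abs _ _
      _ ≤ ∑ i, |a i| := Finset.sum_le_sum fun i _ => by
          rw [abs_mul]
          calc |a i| * |Y ω i| ≤ |a i| * 1 :=
                mul_le_mul_of_nonneg_left ((abs_le_euclNorm' _ i).trans hω) (abs_nonneg _)
            _ = |a i| := mul_one _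
  -- second moments of Y equal those of X
  have hYX2 : ∀ b : Fin d → ℝ, (∫ ω, (b ⬝ᵥ Y ω) ^ 2 ∂P) = ∫ ω, (b ⬝ᵥ X ω) ^ 2 ∂P := by
    intro b
    have hmeas0 : Measurable fun v : Fin d → ℝ => b ⬝ᵥ v := by
      simp only [dotProduct]
      exact Finset.measurable_sum _ fun i _ => measurable_const.mul (measurable_pi_apply i)
    have hmeas : Measurable fun v : Fin d → ℝ => (b ⬝ᵥ v) ^ 2 := hmeas0.pow_const 2
    exact ((hXY.symm).comp hmeas).integral_eq
  -- the Cauchy-Schwarz bound for the cross bilinear form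
  have hCSbound : ∀ a b : Fin d → ℝ,
      |a ⬝ᵥ (Cm *ᵥ b)| ≤ Real.sqrt (a ⬝ᵥ (Sig *ᵥ a)) * Real.sqrt (b ⬝ᵥ (Sig *ᵥ b)) := by
    intro a b
    rw [hCdot]
    have := cs_integral' P (hdotXm a) (hdotYm b) (hdotXb a) (hdotYb b)
    refine this.trans_eq ?_
    rw [hYX2 b]
    rw [hSigdot a a, hSigdot b b]
    congr 1 <;> · congr 1; exact integral_congr_ae (Filter.Eventually.of_forall fun ω => sq _)
  -- matrix square root facts
  set S : Matrix (Fin d) (Fin d) ℝ := psdSqrt hpd.posSemidef with hSdef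
  set R : Matrix (Fin d) (Fin d) ℝ := S⁻¹ with hRdef
  have hSS : S * S = Sig := by
    have hU : (star hpd.posSemidef.1.eigenvectorUnitary : Matrix (Fin d) (Fin d) ℝ) * hpd.posSemidef.1.eigenvectorUnitary.1 = 1 :=
      Matrix.UnitaryGroup.star_mul_self _
    conv_rhs => rw [hpd.posSemidef.1.spectral_theorem, Unitary.conjStarAlgAut_apply]
    rw [hSdef, psdSqrt]
    simp only [Matrix.mul_assoc]
    rw [← Matrix.mul_assoc (star _ : Matrix (Fin d) (Fin d) ℝ) _, hU, Matrix.one_mul, ← Matrix.mul_assoc (diagonal _), diagonal_mul_diagonal]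
    congr 3
    funext i
    simp [Real.mul_self_sqrt (hpd.posSemidef.eigenvalues_nonneg i)]
  have hSherm : Sᵀ = S := by
    rw [hSdef, psdSqrt, transpose_mul, transpose_mul, diagonal_transpose, Matrix.mul_assoc]
    rw [← conjTranspose_eq_transpose_of_trivial, ← conjTranspose_eq_transpose_of_trivial]
    simp [Matrix.star_eq_conjTranspose]
  have hSdet : IsUnit S.det := by
    have h1 : S.det * S.det = Sig.det := by rw [← Matrix.det_mul, hSS]
    have h2 : Sig.det ≠ 0 := ne_of_gt hpd.det_pos
    have : S.det ≠ 0 := fun h => h2 (by rw [← h1, h, mul_zero])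
    exact isUnit_iff_ne_zero.mpr this
  have hRS : R * S = 1 := S.nonsing_inv_mul hSdet
  have hSR : S * R = 1 := S.mul_nonsing_inv hSdet
  have hRherm : Rᵀ = R := by rw [hRdef, Matrix.transpose_nonsing_inv, hSherm]
  have hSigInv : Sig⁻¹ = R * R := by rw [← hSS, Matrix.mul_inv_rev]
  have hRSigR : R * Sig * R = 1 := by
    rw [← hSS, ← Matrix.mul_assoc, Matrix.mul_assoc (R * S), hRS, hSR, Matrix.one_mul]
  have hSigherm : Sigᵀ = Sig := hpd.1
  -- quadratic form identity: (R u)ᵀ Sig (R u) = uᵀ u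
  have hquad : ∀ u : Fin d → ℝ, (R *ᵥ u) ⬝ᵥ (Sig *ᵥ (R *ᵥ u)) = u ⬝ᵥ u := by
    intro u
    rw [Matrix.mulVec_mulVec, dot_mulVec_eq', Matrix.transpose_mul, hRherm, hSigherm,
      Matrix.mulVec_mulVec, hRSigR, Matrix.one_mulVec]
  -- the contraction M = R C R
  set M : Matrix (Fin d) (Fin d) ℝ := R * Cm * R with hMdef
  have hMcontract : ∀ x : Fin d → ℝ, euclNorm (M *ᵥ x) ≤ euclNorm x := by
    intro x
    have h1 : ∀ w : Fin d → ℝ, w ⬝ᵥ (M *ᵥ x) = (R *ᵥ w) ⬝ᵥ (Cm *ᵥ (R *ᵥ x)) := by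
      intro w
      rw [hMdef, show (R * Cm * R) *ᵥ x = R *ᵥ (Cm *ᵥ (R *ᵥ x)) by
        rw [Matrix.mulVec_mulVec, Matrix.mulVec_mulVec]]
      rw [dot_mulVec_eq' R w (Cm *ᵥ (R *ᵥ x)), hRherm]
    set w : Fin d → ℝ := M *ᵥ x with hw
    have h2 : w ⬝ᵥ w ≤ euclNorm w * euclNorm x := by
      rw [hw, h1]
      calc (R *ᵥ w) ⬝ᵥ (Cm *ᵥ (R *ᵥ x)) ≤ |(R *ᵥ w) ⬝ᵥ (Cm *ᵥ (R *ᵥ x))| := le_abs_self _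
        _ ≤ Real.sqrt ((R *ᵥ w) ⬝ᵥ (Sig *ᵥ (R *ᵥ w))) *
              Real.sqrt ((R *ᵥ x) ⬝ᵥ (Sig *ᵥ (R *ᵥ x))) := hCSbound _ _
        _ = euclNorm w * euclNorm x := by
              rw [hquad (M *ᵥ x), hquad x, ← euclNorm_sqrt_dot', ← euclNorm_sqrt_dot', ← hw]
    have h3 : euclNorm w ^ 2 ≤ euclNorm w * euclNorm x := by rw [sq_euclNorm']; exact h2
    rcases eq_or_lt_of_le (euclNorm_nonneg' w) with h0 | h0
    · rw [← h0]; exact euclNorm_nonneg' x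
    · nlinarith [h3]
  -- B = R Abar R = 1 - γ M
  have hB : R * Abar * R = 1 - γ • M := by
    rw [hAsplit, Matrix.mul_sub, Matrix.sub_mul, hRSigR, Matrix.mul_smul, Matrix.smul_mul,
      ← hMdef]
  -- key norm lower bound
  have hkey : ∀ x : Fin d → ℝ, (1 - γ) * euclNorm x ≤ euclNorm ((R * Abar * R) *ᵥ x) := by
    intro x
    rw [hB]
    have hvec : (1 - γ • M) *ᵥ x = x - γ • (M *ᵥ x) := by
      rw [Matrix.sub_mulVec, Matrix.one_mulVec, Matrix.smul_mulVec]
    rw [hvec]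
    -- work in EuclideanSpace
    have e : ∀ u : Fin d → ℝ, euclNorm u = ‖(WithLp.equiv 2 (Fin d → ℝ)).symm u‖ :=
      euclNorm_eq_norm'
    rw [e, e]
    have hsub : (WithLp.equiv 2 (Fin d → ℝ)).symm (x - γ • (M *ᵥ x))
        = (WithLp.equiv 2 (Fin d → ℝ)).symm x - γ • (WithLp.equiv 2 (Fin d → ℝ)).symm (M *ᵥ x) := by
      rfl
    rw [hsub]
    have htri' := norm_sub_norm_le ((WithLp.equiv 2 (Fin d → ℝ)).symm x)
      (γ • (WithLp.equiv 2 (Fin d → ℝ)).symm (M *ᵥ x))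
    refine le_trans ?_ htri'
    rw [norm_smul, Real.norm_eq_abs, abs_of_nonneg hγ0]
    have hM' : ‖(WithLp.equiv 2 (Fin d → ℝ)).symm (M *ᵥ x)‖
        ≤ ‖(WithLp.equiv 2 (Fin d → ℝ)).symm x‖ := by
      rw [← e, ← e]; exact hMcontract x
    nlinarith [norm_nonneg ((WithLp.equiv 2 (Fin d → ℝ)).symm x)]
  constructor
  · -- positive semidefiniteness
    have hmat : R * Abarᵀ * Sig⁻¹ * Abar * R = (R * Abar * R)ᵀ * (R * Abar * R) := by
      rw [hSigInv]
      rw [Matrix.transpose_mul, Matrix.transpose_mul, hRherm]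
      noncomm_ring
    refine Matrix.posSemidef_iff_dotProduct_mulVec.mpr ⟨?_, ?_⟩
    · -- Hermitian
      have h1 : (R * Abarᵀ * Sig⁻¹ * Abar * R - (1 - γ) ^ 2 • 1)ᵀ
          = R * Abarᵀ * Sig⁻¹ * Abar * R - (1 - γ) ^ 2 • 1 := by
        rw [hmat, Matrix.transpose_sub, Matrix.transpose_smul, Matrix.transpose_one,
          Matrix.transpose_mul, Matrix.transpose_transpose]
      rw [Matrix.IsHermitian, Matrix.conjTranspose_eq_transpose_of_trivial]
      exact h1
    · intro x
      have hform : (star x) ⬝ᵥ ((R * Abarᵀ * Sig⁻¹ * Abar * R - (1 - γ) ^ 2 • 1) *ᵥ x)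
          = ((R * Abar * R) *ᵥ x) ⬝ᵥ ((R * Abar * R) *ᵥ x) - (1 - γ) ^ 2 * (x ⬝ᵥ x) := by
        have hstar : (star x : Fin d → ℝ) = x := by simp
        rw [hstar, hmat, Matrix.sub_mulVec, dotProduct_sub]
        congr 1
        · rw [← Matrix.mulVec_mulVec, dot_mulVec_eq', Matrix.transpose_transpose]
        · rw [Matrix.smul_mulVec, Matrix.one_mulVec, dotProduct_smul, smul_eq_mul]
      have h2 := hkey x
      have h3 : ((1 - γ) * euclNorm x) ^ 2 ≤ euclNorm ((R * Abar * R) *ᵥ x) ^ 2 := by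
        apply sq_le_sq'
        · nlinarith [euclNorm_nonneg' ((R * Abar * R) *ᵥ x), euclNorm_nonneg' x,
            mul_nonneg (le_of_lt (by linarith : (0:ℝ) < 1 - γ)) (euclNorm_nonneg' x)]
        · exact h2
      rw [mul_pow, sq_euclNorm', sq_euclNorm'] at h3
      show 0 ≤ _
      rw [hform]
      linarith
  · exact hkey
end
end
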